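/- Let X be a complex Banach space, (a_r)_{r≥1} a sequence of unit vectors in X, and (φ_r)_{r≥1} continuous linear functionals on X with ‖φ_r‖ ≥ 1 and φ_s(a_r) = δ_{rs}. Define y × x = Σ_{r=1}^∞ (2^{−r}/‖φ_r‖²) φ_r(y)φ_r(x) a_r. Then the series converges absolutely for all x, y, the product × is commutative and associative, and ‖y × x‖ ≤ ‖y‖‖x‖, so (X, ×) is a commutative Banach algebra. Moreover, for z, y, x ∈ X, z × (y × x) = Σ_{r=1}^∞ (2^{−2r}/‖φ_r‖⁴) φ_r(z)φ_r(y)φ_r(x) a_r. -/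

import Mathlib

/-- The product `y × x = Σ_r (2^{−(r+1)}/‖φ_r‖²) φ_r(y)φ_r(x) • a_r`
(indices start at `0`, so the weight of the `r`-th term is `2^{−(r+1)}`). -/
noncomputable def seqMul {X : Type*} [NormedAddCommGroup X] [NormedSpace ℂ X]
    (a : ℕ → X) (φ : ℕ → X →L[ℂ] ℂ) (y x : X) : X :=
  ∑' r : ℕ, ((((2 : ℝ) ^ (r + 1))⁻¹ / ‖φ r‖ ^ 2) • ((φ r y * φ r x) • a r))

/-- Let `X` be a complex Banach space, `(a_r)` unit vectors and
`(φ_r)` continuous linear functionals with `‖φ_r‖ ≥ 1` and `φ_s(a_r) = δ_{rs}`.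
Then the series defining `y × x` converges absolutely, `×` is commutative and
associative, `‖y × x‖ ≤ ‖y‖‖x‖` (so `(X, ×)` is a commutative Banach algebra), and
`z × (y × x) = Σ_r (2^{−2(r+1)}/‖φ_r‖⁴) φ_r(z)φ_r(y)φ_r(x) • a_r`. -/
theorem stmt15 (X : Type*) [NormedAddCommGroup X] [NormedSpace ℂ X] [CompleteSpace X]
    (a : ℕ → X) (ha : ∀ r, ‖a r‖ = 1)
    (φ : ℕ → X →L[ℂ] ℂ) (hφ : ∀ r, 1 ≤ ‖φ r‖)
    (hbi : ∀ r s : ℕ, φ s (a r) = if r = s then 1 else 0) :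
    (∀ x y : X, Summable fun r : ℕ =>
      ‖(((2 : ℝ) ^ (r + 1))⁻¹ / ‖φ r‖ ^ 2) • ((φ r y * φ r x) • a r)‖) ∧
    (∀ x y : X, seqMul a φ y x = seqMul a φ x y) ∧
    (∀ x y z : X, seqMul a φ (seqMul a φ z y) x = seqMul a φ z (seqMul a φ y x)) ∧
    (∀ x y : X, ‖seqMul a φ y x‖ ≤ ‖y‖ * ‖x‖) ∧
    (∀ x y z : X, seqMul a φ z (seqMul a φ y x)
      = ∑' r : ℕ, ((((2 : ℝ) ^ (2 * (r + 1)))⁻¹ / ‖φ r‖ ^ 4) •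
          ((φ r z * φ r y * φ r x) • a r))) := by
  set c : ℕ → ℝ := fun r => ((2 : ℝ) ^ (r + 1))⁻¹ / ‖φ r‖ ^ 2 with hc
  have hφpos : ∀ r, (0 : ℝ) < ‖φ r‖ := fun r => lt_of_lt_of_le one_pos (hφ r)
  have hcpos : ∀ r, 0 < c r := fun r => by
    exact div_pos (by positivity) (pow_pos (hφpos r) 2)
  -- combine smuls
  have hsmul : ∀ (t : ℝ) (w : ℂ) (v : X), t • (w • v) = (((t : ℂ)) * w) • v := by
    intro t w v
    rw [mul_smul, Complex.coe_smul]
  -- term bound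
  have hbound : ∀ (x y : X) (r : ℕ),
      ‖c r • ((φ r y * φ r x) • a r)‖ ≤ (2⁻¹ : ℝ) ^ (r + 1) * (‖y‖ * ‖x‖) := by
    intro x y r
    rw [norm_smul, norm_smul, ha, mul_one, Real.norm_eq_abs, abs_of_pos (hcpos r), norm_mul]
    have h1 : ‖φ r y‖ ≤ ‖φ r‖ * ‖y‖ := (φ r).le_opNorm y
    have h2 : ‖φ r x‖ ≤ ‖φ r‖ * ‖x‖ := (φ r).le_opNorm x
    have hy : (0:ℝ) ≤ ‖φ r y‖ := norm_nonneg _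
    have hx : (0:ℝ) ≤ ‖φ r x‖ := norm_nonneg _
    have hN := hφpos r
    have hA : (0:ℝ) < ((2:ℝ) ^ (r+1))⁻¹ := by positivity
    have hpow : (2⁻¹ : ℝ) ^ (r + 1) = ((2:ℝ) ^ (r+1))⁻¹ := by
      rw [inv_pow]
    rw [hpow, hc]
    simp only []
    rw [div_mul_eq_mul_div, div_le_iff₀ (by positivity)]
    calc ((2:ℝ) ^ (r+1))⁻¹ * (‖φ r y‖ * ‖φ r x‖)
        ≤ ((2:ℝ) ^ (r+1))⁻¹ * ((‖φ r‖ * ‖y‖) * (‖φ r‖ * ‖x‖)) := by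
          apply mul_le_mul_of_nonneg_left _ (le_of_lt hA)
          exact mul_le_mul h1 h2 hx (by positivity)
      _ = ((2:ℝ) ^ (r+1))⁻¹ * (‖y‖ * ‖x‖) * ‖φ r‖ ^ 2 := by ring
  -- summability of the geometric bound
  have hg : ∀ C : ℝ, Summable fun r : ℕ => (2⁻¹ : ℝ) ^ (r + 1) * C := by
    intro C
    have h := (summable_geometric_of_lt_one (by norm_num : (0:ℝ) ≤ 2⁻¹)
      (by norm_num : (2⁻¹:ℝ) < 1)).mul_right (2⁻¹ * C)
    exact h.congr fun r => by rw [pow_succ]; ring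
  have htg : ∀ C : ℝ, (∑' r : ℕ, (2⁻¹ : ℝ) ^ (r + 1) * C) = C := by
    intro C
    have h : ∀ r : ℕ, (2⁻¹ : ℝ) ^ (r + 1) * C = (2⁻¹:ℝ) ^ r * (2⁻¹ * C) := by
      intro r; rw [pow_succ]; ring
    rw [tsum_congr h, tsum_mul_right, tsum_geometric_of_lt_one (by norm_num) (by norm_num)]
    ring
  -- absolute summability
  have hsum : ∀ x y : X, Summable fun r : ℕ => ‖c r • ((φ r y * φ r x) • a r)‖ := by
    intro x y
    exact (hg (‖y‖ * ‖x‖)).of_nonneg_of_le (fun r => norm_nonneg _) (hbound x y)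
  have hsumX : ∀ x y : X, Summable fun r : ℕ => c r • ((φ r y * φ r x) • a r) :=
    fun x y => (hsum x y).of_norm
  -- key: φ s (y × x) = c s * φ s y * φ s x
  have hkey : ∀ (x y : X) (s : ℕ), φ s (seqMul a φ y x) = (c s : ℂ) * (φ s y * φ s x) := by
    intro x y s
    rw [seqMul, (φ s).map_tsum (hsumX x y)]
    have h : ∀ r : ℕ, φ s (c r • ((φ r y * φ r x) • a r))
        = if r = s then (c s : ℂ) * (φ s y * φ s x) else 0 := by
      intro r
      rw [(φ s).map_smul_of_tower, map_smul, hbi]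
      by_cases h : r = s
      · subst h; simp [Complex.real_smul]
      · simp [h]
    rw [tsum_congr h, tsum_ite_eq]
  -- commutativity
  have hcomm : ∀ x y : X, seqMul a φ y x = seqMul a φ x y := by
    intro x y
    exact tsum_congr fun r => by rw [mul_comm (φ r y)]
  -- formula for z × (y × x)
  have hform : ∀ x y z : X, seqMul a φ z (seqMul a φ y x)
      = ∑' r : ℕ, (((c r : ℂ) * ((c r : ℂ) * (φ r z * (φ r y * φ r x)))) • a r) := by
    intro x y z
    refine tsum_congr fun r => ?_
    rw [hsmul, hkey]
    congr 1
    simp only [hc]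
    ring
  refine ⟨hsum, hcomm, ?_, ?_, ?_⟩
  · -- associativity
    intro x y z
    rw [hcomm x (seqMul a φ z y), hform y z x, hform x y z]
    refine tsum_congr fun r => ?_
    congr 1
    ring
  · -- norm bound
    intro x y
    calc ‖seqMul a φ y x‖ ≤ ∑' r : ℕ, ‖c r • ((φ r y * φ r x) • a r)‖ :=
          norm_tsum_le_tsum_norm (hsum x y)
      _ ≤ ∑' r : ℕ, (2⁻¹ : ℝ) ^ (r + 1) * (‖y‖ * ‖x‖) :=
          Summable.tsum_le_tsum (hbound x y) (hsum x y) (hg _)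
      _ = ‖y‖ * ‖x‖ := htg _
  · -- the explicit double-product formula
    intro x y z
    rw [hform x y z]
    refine tsum_congr fun r => ?_
    rw [hsmul]
    congr 1
    have hreal : ((2 : ℝ) ^ (2 * (r + 1)))⁻¹ / ‖φ r‖ ^ 4 = c r * c r := by
      have h2 : (2 : ℝ) ^ (2 * (r + 1)) = ((2:ℝ) ^ (r + 1)) ^ 2 := by
        rw [mul_comm, pow_mul]
      rw [h2, hc]
      have hN : ‖φ r‖ ≠ 0 := ne_of_gt (hφpos r)
      field_simp
    rw [hreal]
    push_cast
    ring
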